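/- For every integer d ≥ 1, F_∞(λ, n, d) ≤ |S_n^λ| / V_∞(λ, n, ⌊(d−1)/2⌋). -/

import Mathlib

open Finset

/-- `Snl lam n m` : the set of sequences of length `n` with values in `Fin m`
(representing symbols `1,…,m`) in which every symbol occurs exactly `lam` times. -/
def Snl (lam n m : ℕ) : Finset (Fin n → Fin m) :=
  univ.filter fun x => ∀ v : Fin m, (univ.filter fun i => x i = v).card = lam

/-- `ℓ∞` distance between two sequences. -/
def linf {n m : ℕ} (x y : Fin n → Fin m) : ℕ :=
  univ.sup fun i => ((x i : ℤ) - (y i : ℤ)).natAbs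

/-- The identity permutation `I_n^λ`, whose `i`-th entry (1-indexed) is `⌈i/λ⌉`;
in the 0-indexed representation this is `i / λ`. -/
def idperm (lam n m : ℕ) (hm : 0 < m) : Fin n → Fin m :=
  fun i => if h : i.val / lam < m then ⟨i.val / lam, h⟩ else ⟨0, hm⟩

/-- `V_∞(λ,n,d)` : the number of elements of `S_n^λ` within `ℓ∞`-distance `d`
from the identity permutation. -/
def Vball (lam n m d : ℕ) (hm : 0 < m) : ℕ :=
  ((Snl lam n m).filter fun y => linf (idperm lam n m hm) y ≤ d).card


/-- `F_∞(λ,n,d)` : the largest cardinality of a subset of `S_n^λ` whose distinct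
elements are pairwise at `ℓ∞`-distance at least `d` (a `(λ,n,d)`-FPA). -/
noncomputable def Fmax (lam n m d : ℕ) : ℕ :=
  sSup {c : ℕ | ∃ C : Finset (Fin n → Fin m),
    C ⊆ Snl lam n m ∧ (∀ x ∈ C, ∀ y ∈ C, x ≠ y → d ≤ linf x y) ∧ C.card = c}

/- ### Auxiliary lemmas -/

lemma linf_le_iff {n m : ℕ} (x y : Fin n → Fin m) (d : ℕ) :
    linf x y ≤ d ↔ ∀ i, ((x i : ℤ) - (y i : ℤ)).natAbs ≤ d := by
  simp [linf, Finset.sup_le_iff]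

lemma linf_comm {n m : ℕ} (x y : Fin n → Fin m) : linf x y = linf y x := by
  unfold linf
  congr 1; funext i
  rw [← Int.natAbs_neg, neg_sub]

lemma le_linf {n m : ℕ} (x y : Fin n → Fin m) (i : Fin n) :
    ((x i : ℤ) - (y i : ℤ)).natAbs ≤ linf x y := by
  unfold linf
  exact Finset.le_sup (f := fun i => ((x i : ℤ) - (y i : ℤ)).natAbs) (mem_univ i)

lemma linf_triangle {n m : ℕ} (x y z : Fin n → Fin m) :
    linf x z ≤ linf x y + linf y z := by
  rw [linf_le_iff]
  intro i
  have h1 : ((x i : ℤ) - (z i : ℤ)) = ((x i : ℤ) - y i) + ((y i : ℤ) - z i) := by ring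
  rw [h1]
  calc (((x i : ℤ) - y i) + ((y i : ℤ) - z i)).natAbs
      ≤ ((x i : ℤ) - y i).natAbs + ((y i : ℤ) - z i).natAbs := Int.natAbs_add_le _ _
    _ ≤ linf x y + linf y z := Nat.add_le_add (le_linf x y i) (le_linf y z i)

lemma linf_self {n m : ℕ} (x : Fin n → Fin m) : linf x x = 0 := by
  simp [linf]

lemma linf_comp {n m : ℕ} (x y : Fin n → Fin m) (σ : Equiv.Perm (Fin n)) :
    linf (x ∘ σ) (y ∘ σ) = linf x y := by
  unfold linf
  conv_rhs => rw [← Finset.map_univ_equiv σ, Finset.sup_map]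
  rfl

lemma card_filter_comp {n : ℕ} {α : Type*} [DecidableEq α] (σ : Equiv.Perm (Fin n))
    (y : Fin n → α) (v : α) :
    (univ.filter fun i => y (σ i) = v).card = (univ.filter fun i => y i = v).card := by
  apply Finset.card_bij (fun i _ => σ i)
  · intro a ha
    simp only [mem_filter, mem_univ, true_and] at ha ⊢
    exact ha
  · intro a _ b _ h
    exact σ.injective h
  · intro b hb
    simp only [mem_filter, mem_univ, true_and] at hb
    exact ⟨σ.symm b, by simpa using hb, σ.apply_symm_apply b⟩

lemma comp_mem_Snl {lam n m : ℕ} (y : Fin n → Fin m) (σ : Equiv.Perm (Fin n))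
    (hy : y ∈ Snl lam n m) : (y ∘ σ) ∈ Snl lam n m := by
  simp only [Snl, mem_filter, mem_univ, true_and] at hy ⊢
  intro v
  rw [show (univ.filter fun i => (y ∘ σ) i = v) = (univ.filter fun i => y (σ i) = v) from rfl]
  rw [card_filter_comp σ y v]
  exact hy v

lemma idperm_mem_Snl (lam m : ℕ) (hl : 0 < lam) (hm : 0 < m) (n : ℕ) (hn : n = m * lam) :
    idperm lam n m hm ∈ Snl lam n m := by
  simp only [Snl, mem_filter, mem_univ, true_and]
  intro v
  have key : ∀ i : Fin n, idperm lam n m hm i = v ↔ (v.val * lam ≤ i.val ∧ i.val < (v.val + 1) * lam) := by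
    intro i
    have hdl : i.val / lam < m := by
      rw [Nat.div_lt_iff_lt_mul hl, ← hn]
      exact i.isLt
    have h1 : v.val ≤ i.val / lam ↔ v.val * lam ≤ i.val := Nat.le_div_iff_mul_le hl
    have h2 : i.val / lam < v.val + 1 ↔ i.val < (v.val + 1) * lam := Nat.div_lt_iff_lt_mul hl
    constructor
    · intro h
      have : i.val / lam = v.val := by
        simp only [idperm, dif_pos hdl] at h
        exact congrArg Fin.val h
      omega
    · intro h
      have : i.val / lam = v.val := by omega
      simp only [idperm, dif_pos hdl]
      exact Fin.ext this
  have hcard : (univ.filter fun i : Fin n => idperm lam n m hm i = v).card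
      = ((Finset.range n).filter fun i => v.val * lam ≤ i ∧ i < (v.val + 1) * lam).card := by
    apply Finset.card_bij (fun i _ => i.val)
    · intro a ha
      simp only [mem_filter, mem_univ, true_and] at ha
      simp only [mem_filter, Finset.mem_range]
      exact ⟨a.isLt, (key a).1 ha⟩
    · intro a _ b _ h; exact Fin.ext h
    · intro b hb
      simp only [mem_filter, Finset.mem_range] at hb
      refine ⟨⟨b, hb.1⟩, ?_, rfl⟩
      simp only [mem_filter, mem_univ, true_and]
      exact (key ⟨b, hb.1⟩).2 hb.2
  rw [hcard]
  have hsub : ((Finset.range n).filter fun i => v.val * lam ≤ i ∧ i < (v.val + 1) * lam)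
      = Finset.Ico (v.val * lam) ((v.val + 1) * lam) := by
    ext i
    simp only [mem_filter, Finset.mem_range, Finset.mem_Ico]
    constructor
    · tauto
    · intro h
      refine ⟨?_, h⟩
      have hv1 : v.val + 1 ≤ m := v.isLt
      calc i < (v.val + 1) * lam := h.2
        _ ≤ m * lam := Nat.mul_le_mul_right lam hv1
        _ = n := hn.symm
  rw [hsub, Nat.card_Ico]
  have : (v.val + 1) * lam = v.val * lam + lam := by ring
  omega

/-- Every ball of radius `r` around an element of `S_n^λ` has cardinality `Vball lam n m r`. -/
lemma ball_card (lam m : ℕ) (hl : 0 < lam) (hm : 0 < m) (n : ℕ) (hn : n = m * lam)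
    (r : ℕ) (x : Fin n → Fin m) (hx : x ∈ Snl lam n m) :
    ((Snl lam n m).filter fun y => linf x y ≤ r).card = Vball lam n m r hm := by
  set g := idperm lam n m hm with hg
  have hxc : ∀ v : Fin m, (univ.filter fun i => x i = v).card = lam := by
    simpa [Snl] using hx
  have hgc : ∀ v : Fin m, (univ.filter fun i => g i = v).card = lam := by
    simpa [Snl] using idperm_mem_Snl lam m hl hm n hn
  -- build a permutation σ of positions with x ∘ σ = g
  have hfib : ∀ v : Fin m, Fintype.card {i // x i = v} = Fintype.card {i // g i = v} := by
    intro v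
    rw [Fintype.card_subtype, Fintype.card_subtype, hxc v, hgc v]
  obtain ⟨σ, hσ⟩ : ∃ σ : Equiv.Perm (Fin n), ∀ i, x (σ i) = g i := by
    let e : (Σ v : Fin m, {i // g i = v}) ≃ (Σ v : Fin m, {i // x i = v}) :=
      Equiv.sigmaCongrRight fun v => Fintype.equivOfCardEq (hfib v).symm
    refine ⟨((Equiv.sigmaFiberEquiv g).symm.trans e).trans (Equiv.sigmaFiberEquiv x), ?_⟩
    intro i
    have h1 : (Equiv.sigmaFiberEquiv g).symm i = ⟨g i, ⟨i, rfl⟩⟩ := rfl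
    simp only [Equiv.trans_apply, h1]
    have h2 : e ⟨g i, ⟨i, rfl⟩⟩ = ⟨g i, (Fintype.equivOfCardEq (hfib (g i)).symm) ⟨i, rfl⟩⟩ := rfl
    rw [h2]
    exact ((Fintype.equivOfCardEq (hfib (g i)).symm) ⟨i, rfl⟩).2
  have hxσ : x ∘ σ = g := funext hσ
  unfold Vball
  apply Finset.card_bij (fun y _ => y ∘ σ)
  · intro y hy
    simp only [mem_filter] at hy ⊢
    refine ⟨comp_mem_Snl y σ hy.1, ?_⟩
    rw [← hg, ← hxσ, linf_comp]
    exact hy.2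
  · intro a _ b _ h
    funext i
    have := congrFun h (σ.symm i)
    simpa using this
  · intro z hz
    simp only [mem_filter] at hz
    refine ⟨z ∘ σ.symm, ?_, ?_⟩
    · simp only [mem_filter]
      refine ⟨comp_mem_Snl z σ.symm hz.1, ?_⟩
      have : linf (x ∘ σ) ((z ∘ σ.symm) ∘ σ) = linf x (z ∘ σ.symm) := linf_comp _ _ σ
      have hzz : (z ∘ σ.symm) ∘ σ = z := by
        funext i; simp
      rw [hzz, hxσ] at this
      rw [← this, hg]
      exact hz.2
    · funext i; simp

/-! ### Main theorem -/

theorem Fmax_upper_bound (lam m : ℕ) (hl : 0 < lam) (hm : 0 < m)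
    (n : ℕ) (hn : n = m * lam) (d : ℕ) (hd : 1 ≤ d) :
    (Fmax lam n m d : ℝ)
      ≤ ((Snl lam n m).card : ℝ) / (Vball lam n m ((d - 1) / 2) hm : ℝ) := by
  set r := (d - 1) / 2 with hr
  set V := Vball lam n m r hm with hV
  -- V is positive
  have hVpos : 0 < V := by
    rw [hV]
    unfold Vball
    apply Finset.card_pos.2
    refine ⟨idperm lam n m hm, ?_⟩
    simp only [mem_filter]
    exact ⟨idperm_mem_Snl lam m hl hm n hn, by rw [linf_self]; exact Nat.zero_le _⟩
  -- the defining set of Fmax is nonempty and bounded above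
  set S := {c : ℕ | ∃ C : Finset (Fin n → Fin m),
    C ⊆ Snl lam n m ∧ (∀ x ∈ C, ∀ y ∈ C, x ≠ y → d ≤ linf x y) ∧ C.card = c} with hS
  have hne : S.Nonempty := ⟨0, ∅, by simp⟩
  have hbdd : BddAbove S := by
    refine ⟨(Snl lam n m).card, ?_⟩
    rintro c ⟨C, hC, _, rfl⟩
    exact Finset.card_le_card hC
  have hmem : Fmax lam n m d ∈ S := Nat.sSup_mem hne hbdd
  obtain ⟨C, hCsub, hCdist, hCcard⟩ := hmem
  -- the balls around elements of C are pairwise disjoint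
  have hdisj : ∀ x ∈ C, ∀ y ∈ C, x ≠ y →
      Disjoint ((Snl lam n m).filter fun z => linf x z ≤ r)
               ((Snl lam n m).filter fun z => linf y z ≤ r) := by
    intro x hx y hy hxy
    rw [Finset.disjoint_left]
    intro z hz1 hz2
    simp only [mem_filter] at hz1 hz2
    have h1 : linf x y ≤ linf x z + linf z y := linf_triangle x z y
    have h2 : linf z y = linf y z := linf_comm z y
    have h3 : d ≤ linf x y := hCdist x hx y hy hxy
    have h4 : 2 * r ≤ d - 1 := by omega
    omega
  -- counting
  have hcount : C.card * V ≤ (Snl lam n m).card := by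
    have hsub : (C.biUnion fun x => (Snl lam n m).filter fun z => linf x z ≤ r) ⊆ Snl lam n m := by
      intro z hz
      simp only [Finset.mem_biUnion, mem_filter] at hz
      obtain ⟨x, _, hz1, _⟩ := hz
      exact hz1
    have hcard := Finset.card_biUnion hdisj
    have hsum : ∑ x ∈ C, ((Snl lam n m).filter fun z => linf x z ≤ r).card = C.card * V := by
      rw [Finset.sum_congr rfl fun x hx => ball_card lam m hl hm n hn r x (hCsub hx)]
      simp [Finset.sum_const, Nat.mul_comm]
      exact Or.inl hV.symm
    calc C.card * V = ∑ x ∈ C, ((Snl lam n m).filter fun z => linf x z ≤ r).card := hsum.symm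
      _ = (C.biUnion fun x => (Snl lam n m).filter fun z => linf x z ≤ r).card := hcard.symm
      _ ≤ (Snl lam n m).card := Finset.card_le_card hsub
  -- conclude over ℝ
  rw [le_div_iff₀ (by exact_mod_cast hVpos)]
  rw [← hCcard]
  calc ((C.card : ℝ) * V) = ((C.card * V : ℕ) : ℝ) := by push_cast; ring
    _ ≤ ((Snl lam n m).card : ℝ) := by exact_mod_cast hcount
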